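/- Let k ∈ ℕ, α, β ∈ ℝ, and let n be an integer with n ≥ 1. Define f_k(r) = ∑_{i=0}^{k} r^{2i}, and define the complex-valued functions u(x) = exp(inx), m(x) = f_k(n) exp(inx), M(x) = exp(−2inx), N(x) = exp(inx). Define (P M)(x) = α[ 2u′M′ + uM″ + (2/f_k(2n)) m M″ + (1/f_k(2n)) m′ M′ ](x) + β[ 2u′M‴ + uM⁗ + (2/f_k(2n)) m M⁗ + (1/f_k(2n)) m′ M‴ ](x), and (P N)(x) = α[ 2u′N′ + uN″ + (2/f_k(n)) m N″ + (1/f_k(n)) m′ N′ ](x) + β[ 2u′N‴ + uN⁗ + (2/f_k(n)) m N⁗ + (1/f_k(n)) m′ N‴ ](x). Then (1/2π) ∫₀^{2π} (P M)(x) · N(x) dx = (24 n⁴ β − 6 n² α) · f_k(n)/f_k(2n), and (1/2π) ∫₀^{2π} M(x) · (P N)(x) dx = 6 n⁴ β − 6 n² α. -/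

import Mathlib

open Real Complex Finset

lemma cexp_hasDerivAt (c : ℂ) (x : ℝ) :
    HasDerivAt (fun y : ℝ => Complex.exp (c * y)) (c * Complex.exp (c * x)) x := by
  have h : HasDerivAt (fun z : ℂ => Complex.exp (c * z)) (c * Complex.exp (c * x)) (x : ℂ) := by
    have := (Complex.hasDerivAt_exp (c * x)).comp (x : ℂ) ((hasDerivAt_id (x : ℂ)).const_mul c)
    simpa [mul_comm, Function.comp_def] using this
  exact h.comp_ofReal

lemma cexp_deriv (c : ℂ) :
    deriv (fun y : ℝ => Complex.exp (c * y)) = fun y : ℝ => c * Complex.exp (c * y) :=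
  funext fun x => (cexp_hasDerivAt c x).deriv

lemma cexp_const_mul_deriv (a c : ℂ) :
    deriv (fun y : ℝ => a * Complex.exp (c * y)) = fun y : ℝ => a * (c * Complex.exp (c * y)) :=
  funext fun x => ((cexp_hasDerivAt c x).const_mul a).deriv

lemma cexp_iteratedDeriv (c : ℂ) (j : ℕ) :
    iteratedDeriv j (fun y : ℝ => Complex.exp (c * y))
      = fun y : ℝ => c ^ j * Complex.exp (c * y) := by
  induction j with
  | zero => simp
  | succ j ih =>
    rw [iteratedDeriv_succ, ih]
    funext x
    have : HasDerivAt (fun y : ℝ => c ^ j * Complex.exp (c * y))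
        (c ^ j * (c * Complex.exp (c * x))) x := (cexp_hasDerivAt c x).const_mul _
    rw [this.deriv]; ring

/-- The two explicit pairings `⟨P(m)M, N⟩` and `⟨M, P(m)N⟩` used in the proof of
the main theorem, for the frequencies `a = n`, `b = -2n`, `c = n`. -/
theorem pairing_values (k : ℕ) (α β : ℝ) (n : ℤ) (hn : 1 ≤ n)
    (fk : ℤ → ℝ) (hfk : ∀ r : ℤ, fk r = ∑ i ∈ Finset.range (k + 1), (r : ℝ) ^ (2 * i))
    (u m M N PM PN : ℝ → ℂ)
    (hu : ∀ x : ℝ, u x = Complex.exp (I * n * x))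
    (hm : ∀ x : ℝ, m x = (fk n : ℂ) * Complex.exp (I * n * x))
    (hM : ∀ x : ℝ, M x = Complex.exp (-2 * I * n * x))
    (hN : ∀ x : ℝ, N x = Complex.exp (I * n * x))
    (hPM : ∀ x : ℝ, PM x
      = (α : ℂ) * (2 * deriv u x * deriv M x + u x * iteratedDeriv 2 M x
          + (2 / (fk (2 * n) : ℂ)) * m x * iteratedDeriv 2 M x
          + (1 / (fk (2 * n) : ℂ)) * deriv m x * deriv M x)
        + (β : ℂ) * (2 * deriv u x * iteratedDeriv 3 M x + u x * iteratedDeriv 4 M x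
          + (2 / (fk (2 * n) : ℂ)) * m x * iteratedDeriv 4 M x
          + (1 / (fk (2 * n) : ℂ)) * deriv m x * iteratedDeriv 3 M x))
    (hPN : ∀ x : ℝ, PN x
      = (α : ℂ) * (2 * deriv u x * deriv N x + u x * iteratedDeriv 2 N x
          + (2 / (fk n : ℂ)) * m x * iteratedDeriv 2 N x
          + (1 / (fk n : ℂ)) * deriv m x * deriv N x)
        + (β : ℂ) * (2 * deriv u x * iteratedDeriv 3 N x + u x * iteratedDeriv 4 N x
          + (2 / (fk n : ℂ)) * m x * iteratedDeriv 4 N x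
          + (1 / (fk n : ℂ)) * deriv m x * iteratedDeriv 3 N x)) :
    (1 / (2 * (π : ℂ))) * (∫ x in (0:ℝ)..(2 * π), PM x * N x)
        = ((24 * (n : ℂ) ^ 4 * β - 6 * (n : ℂ) ^ 2 * α) * (fk n : ℂ) / (fk (2 * n) : ℂ)) ∧
      (1 / (2 * (π : ℂ))) * (∫ x in (0:ℝ)..(2 * π), M x * PN x)
        = 6 * (n : ℂ) ^ 4 * β - 6 * (n : ℂ) ^ 2 * α := by
  -- positivity of fk
  have hfpos : ∀ r : ℤ, (1 : ℝ) ≤ fk r := by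
    intro r
    rw [hfk]
    calc (1 : ℝ) = (r : ℝ) ^ (2 * 0) := by simp
    _ ≤ ∑ i ∈ Finset.range (k + 1), (r : ℝ) ^ (2 * i) :=
      Finset.single_le_sum (f := fun i => (r : ℝ) ^ (2 * i))
        (fun i _ => by show (0:ℝ) ≤ (r : ℝ) ^ (2 * i); rw [pow_mul]; positivity)
        (Finset.mem_range.2 (Nat.succ_pos k))
  have h1 : (fk n : ℂ) ≠ 0 := by
    exact_mod_cast fun h => absurd (le_trans (hfpos n) (le_of_eq (by exact_mod_cast h)))
      (by norm_num)
  have h2 : (fk (2 * n) : ℂ) ≠ 0 := by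
    exact_mod_cast fun h => absurd (le_trans (hfpos (2 * n)) (le_of_eq (by exact_mod_cast h)))
      (by norm_num)
  -- function forms and derivatives
  have hu' : u = fun x : ℝ => Complex.exp (I * n * x) := funext hu
  have hm' : m = fun x : ℝ => (fk n : ℂ) * Complex.exp (I * n * x) := funext hm
  have hM' : M = fun x : ℝ => Complex.exp (-2 * I * n * x) := funext hM
  have hN' : N = fun x : ℝ => Complex.exp (I * n * x) := funext hN
  have hdu : deriv u = fun x : ℝ => (I * n) * Complex.exp (I * n * x) := by
    rw [hu']; exact cexp_deriv (I * n)
  have hdm : deriv m = fun x : ℝ => (fk n : ℂ) * ((I * n) * Complex.exp (I * n * x)) := by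
    rw [hm']; exact cexp_const_mul_deriv _ (I * n)
  have hdM : deriv M = fun x : ℝ => (-2 * I * n) * Complex.exp (-2 * I * n * x) := by
    rw [hM']; exact cexp_deriv (-2 * I * n)
  have hdN : deriv N = fun x : ℝ => (I * n) * Complex.exp (I * n * x) := by
    rw [hN']; exact cexp_deriv (I * n)
  have hiM : ∀ j : ℕ, iteratedDeriv j M
      = fun x : ℝ => (-2 * I * n) ^ j * Complex.exp (-2 * I * n * x) := by
    intro j; rw [hM']; exact cexp_iteratedDeriv (-2 * I * n) j
  have hiN : ∀ j : ℕ, iteratedDeriv j N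
      = fun x : ℝ => (I * n) ^ j * Complex.exp (I * n * x) := by
    intro j; rw [hN']; exact cexp_iteratedDeriv (I * n) j
  have hI : (I : ℂ) ^ 2 = -1 := Complex.I_sq
  have hp : (fk n : ℂ) * (fk n : ℂ)⁻¹ = 1 := mul_inv_cancel₀ h1
  have hs : ∀ x : ℝ, Complex.exp (-2 * I * n * x) * Complex.exp (I * n * x)
      * Complex.exp (I * n * x) = 1 := by
    intro x
    have h0 : (-2 * I * (n : ℂ) * (x : ℂ) + I * n * x) + I * n * x = 0 := by ring
    rw [← Complex.exp_add, ← Complex.exp_add, h0, Complex.exp_zero]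
  have key1 : ∀ x : ℝ, PM x * N x
      = (24 * (n : ℂ) ^ 4 * β - 6 * (n : ℂ) ^ 2 * α) * (fk n : ℂ) / (fk (2 * n) : ℂ) := by
    intro x
    rw [hPM, hN x]
    simp only [hdu, hdm, hdM, hiM, hu, hm, hM]
    linear_combination ((fk n : ℂ) / (fk (2 * n) : ℂ)) *
      ((6 * (α : ℂ) * (n : ℂ) ^ 2 * (Complex.exp (-2 * I * n * x) * Complex.exp (I * n * x)
          * Complex.exp (I * n * x))
        + 24 * (β : ℂ) * (n : ℂ) ^ 4 * (Complex.exp (-2 * I * n * x) * Complex.exp (I * n * x)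
          * Complex.exp (I * n * x)) * (I ^ 2 - 1)) * hI
      + (24 * (β : ℂ) * (n : ℂ) ^ 4 - 6 * (α : ℂ) * (n : ℂ) ^ 2) * hs x)
  have key2 : ∀ x : ℝ, M x * PN x
      = 6 * (n : ℂ) ^ 4 * β - 6 * (n : ℂ) ^ 2 * α := by
    intro x
    rw [hPN, hM x]
    simp only [hdu, hdm, hdN, hiN, hu, hm, hN]
    linear_combination 3 * (Complex.exp (-2 * I * n * x) * Complex.exp (I * n * x)
        * Complex.exp (I * n * x)) * ((α : ℂ) * (I * n) ^ 2 + (β : ℂ) * (I * n) ^ 4) * hp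
      + (6 * (α : ℂ) * (n : ℂ) ^ 2 * (Complex.exp (-2 * I * n * x) * Complex.exp (I * n * x)
          * Complex.exp (I * n * x))
        + 6 * (β : ℂ) * (n : ℂ) ^ 4 * (Complex.exp (-2 * I * n * x) * Complex.exp (I * n * x)
          * Complex.exp (I * n * x)) * (I ^ 2 - 1)) * hI
      + (6 * (β : ℂ) * (n : ℂ) ^ 4 - 6 * (α : ℂ) * (n : ℂ) ^ 2) * hs x
  have hπ : (π : ℂ) ≠ 0 := by exact_mod_cast Real.pi_ne_zero
  constructor
  · rw [intervalIntegral.integral_congr (g := fun _ =>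
      (24 * (n : ℂ) ^ 4 * β - 6 * (n : ℂ) ^ 2 * α) * (fk n : ℂ) / (fk (2 * n) : ℂ))
      (fun x _ => key1 x)]
    rw [intervalIntegral.integral_const]
    rw [Complex.real_smul, sub_zero]
    push_cast
    field_simp
  · rw [intervalIntegral.integral_congr (g := fun _ =>
      (6 * (n : ℂ) ^ 4 * β - 6 * (n : ℂ) ^ 2 * α)) (fun x _ => key2 x)]
    rw [intervalIntegral.integral_const]
    rw [Complex.real_smul, sub_zero]
    push_cast
    field_simp
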